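/- In any orthomodular lattice, (a → c) → c = a' → c, where a → c := a' ∪ (a ∩ c). -/

import Mathlib

/-- An orthomodular lattice. -/
class OrthomodularLattice (α : Type*) extends Lattice α, BoundedOrder α, Compl α where
  sup_compl : ∀ a : α, a ⊔ aᶜ = ⊤
  inf_compl : ∀ a : α, a ⊓ aᶜ = ⊥
  compl_antitone : ∀ a b : α, a ≤ b → bᶜ ≤ aᶜ
  compl_compl : ∀ a : α, aᶜᶜ = a
  orthomodular : ∀ a b : α, a ≤ b → b = a ⊔ (aᶜ ⊓ b)

/-- The Sasaki hook `a → b := a' ∪ (a ∩ b)`. -/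
def shook {α : Type*} [OrthomodularLattice α] (a b : α) : α := aᶜ ⊔ (a ⊓ b)

section aux
variable {α : Type*} [OrthomodularLattice α]

private lemma oml_cc (a : α) : aᶜᶜ = a := OrthomodularLattice.compl_compl a

private lemma oml_anti {a b : α} (h : a ≤ b) : bᶜ ≤ aᶜ :=
  OrthomodularLattice.compl_antitone a b h

private lemma oml_sup_compl (a b : α) : (a ⊔ b)ᶜ = aᶜ ⊓ bᶜ := by
  apply le_antisymm
  · exact le_inf (oml_anti le_sup_left) (oml_anti le_sup_right)
  · have h1 : a ≤ (aᶜ ⊓ bᶜ)ᶜ := by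
      have := oml_anti (inf_le_left : aᶜ ⊓ bᶜ ≤ aᶜ); rwa [oml_cc] at this
    have h2 : b ≤ (aᶜ ⊓ bᶜ)ᶜ := by
      have := oml_anti (inf_le_right : aᶜ ⊓ bᶜ ≤ bᶜ); rwa [oml_cc] at this
    have := oml_anti (sup_le h1 h2)
    rwa [oml_cc] at this

private lemma oml_inf_compl (a b : α) : (a ⊓ b)ᶜ = aᶜ ⊔ bᶜ := by
  have h := oml_sup_compl aᶜ bᶜ
  rw [oml_cc, oml_cc] at h
  rw [← h, oml_cc]

/-- Dual orthomodular law. -/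
private lemma oml_dual {a b : α} (h : b ≤ a) : b = a ⊓ (aᶜ ⊔ b) := by
  have h' : aᶜ ≤ bᶜ := oml_anti h
  have key := OrthomodularLattice.orthomodular aᶜ bᶜ h'
  rw [oml_cc] at key
  have := congrArg (·ᶜ) key
  beta_reduce at this
  rw [oml_sup_compl, oml_cc, oml_inf_compl, oml_cc, oml_cc] at this
  exact this

end aux

/-- In any orthomodular lattice, `(a → c) → c = a' → c`. -/
theorem stmt_11 {α : Type*} [OrthomodularLattice α] (a c : α) :
    shook (shook a c) c = shook aᶜ c := by
  set x : α := aᶜ ⊔ (a ⊓ c) with hx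
  have hLHS : shook (shook a c) c = xᶜ ⊔ (x ⊓ c) := rfl
  have hRHS : shook aᶜ c = a ⊔ (aᶜ ⊓ c) := by
    show aᶜᶜ ⊔ (aᶜ ⊓ c) = a ⊔ (aᶜ ⊓ c)
    rw [oml_cc]
  set r : α := a ⊔ (aᶜ ⊓ c) with hr
  rw [hLHS, hRHS]
  set L : α := xᶜ ⊔ (x ⊓ c) with hL
  -- complement computations
  have hxc : xᶜ = a ⊓ (aᶜ ⊔ cᶜ) := by
    rw [hx, oml_sup_compl, oml_cc, oml_inf_compl]
  have hrc : rᶜ = aᶜ ⊓ (a ⊔ cᶜ) := by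
    rw [hr, oml_sup_compl, oml_inf_compl, oml_cc]
  -- r ≤ L
  have ha_le : a ≤ L := by
    have h1 : a ⊓ c ≤ a := inf_le_left
    have key := OrthomodularLattice.orthomodular (a ⊓ c) a h1
    rw [oml_inf_compl] at key
    have h2 : (aᶜ ⊔ cᶜ) ⊓ a = xᶜ := by rw [hxc, inf_comm]
    rw [h2] at key
    have h3 : a ⊓ c ≤ x ⊓ c := by rw [hx]; exact le_inf le_sup_right inf_le_right
    calc a = (a ⊓ c) ⊔ xᶜ := key
      _ ≤ (x ⊓ c) ⊔ xᶜ := sup_le_sup_right h3 _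
      _ = xᶜ ⊔ (x ⊓ c) := sup_comm _ _
  have hac_le : aᶜ ⊓ c ≤ L := by
    have : aᶜ ⊓ c ≤ x ⊓ c := by rw [hx]; exact le_inf (inf_le_left.trans le_sup_left) inf_le_right
    exact this.trans le_sup_right
  have hrL : r ≤ L := sup_le ha_le hac_le
  -- orthomodularity on r ≤ L
  have hom := OrthomodularLattice.orthomodular r L hrL
  -- rᶜ ≤ x
  have hrx : rᶜ ≤ x := by
    rw [hrc]; exact inf_le_left.trans le_sup_left
  -- x ⊓ L = x ⊓ c
  have hxL : x ⊓ L = x ⊓ c := by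
    have := oml_dual (inf_le_left : x ⊓ c ≤ x)
    rw [hL]; exact this.symm
  -- rᶜ ⊓ L = ⊥
  have hbot : rᶜ ⊓ L = ⊥ := by
    have h1 : rᶜ ⊓ L = rᶜ ⊓ (x ⊓ L) := by
      rw [← inf_assoc, inf_of_le_left hrx]
    rw [h1, hxL]
    apply le_antisymm _ bot_le
    have h2 : rᶜ ⊓ (x ⊓ c) ≤ rᶜ ⊓ c :=
      le_inf inf_le_left (inf_le_right.trans inf_le_right)
    refine h2.trans ?_
    have h3 : rᶜ ⊓ c ≤ (aᶜ ⊓ c) ⊓ (aᶜ ⊓ c)ᶜ := by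
      rw [hrc, oml_inf_compl, oml_cc]
      exact le_inf (le_inf (inf_le_left.trans inf_le_left) inf_le_right)
        ((inf_le_left.trans inf_le_right).trans (by rw [sup_comm]))
    exact h3.trans (le_of_eq (OrthomodularLattice.inf_compl _))
  rw [hbot, sup_bot_eq] at hom
  exact hom
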